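/- arXiv:1604.06568 — 6 statements merged into one kernel-verified Lean document; each statement's English description precedes it below -/
import Mathlib

section
/- Suppose the neighborhood system on the finite sample space 𝒴 is determined by the undirected graph G = (𝒴, E), and let 𝒴₀ ⊆ 𝒴 be a subset such that ⋃_{y∈𝒴₀} n(y) = 𝒴. Define the graph G₀ = (𝒴₀, E₀) by (y, y') ∈ E₀ if and only if y ≠ y' and n(y) ∩ n(y') ≠ ∅. If G₀ is connected and every local potential φ_y (y ∈ 𝒴₀) is strictly convex on ℝ_{>0}^{b(y)}, then the composite local Bregman divergence D_Φ satisfies the coincidence axiom on 𝒫: for all p, q ∈ 𝒫, D_Φ(p, q) = 0 implies p = q. -/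
open scoped BigOperators

noncomputable def bregman {A : Type*} [Fintype A] [DecidableEq A]
    (φ : (A → ℝ) → ℝ) (f g : A → ℝ) : ℝ :=
  φ f - φ g - ∑ a, fderiv ℝ φ g (Pi.single a 1) * (f a - g a)

def posOrth (A : Type*) : Set (A → ℝ) := {g | ∀ a, 0 < g a}

def probSet (Y : Type*) [Fintype Y] : Set (Y → ℝ) :=
  {p | (∀ y, 0 < p y) ∧ ∑ y, p y = 1}

noncomputable def DPhi {Y : Type*} [Fintype Y] [DecidableEq Y]
    (G : SimpleGraph Y) [DecidableRel G.Adj] (Y0 : Finset Y)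
    (φ : ∀ y : Y, (↥(G.neighborSet y) → ℝ) → ℝ) (f g : Y → ℝ) : ℝ :=
  ∑ y ∈ Y0, f y * bregman (φ y) (fun z => f z.1 / f y) (fun z => g z.1 / g y)

def nbd {Y : Type*} (G : SimpleGraph Y) (y : Y) : Set Y := insert y (G.neighborSet y)

/-- Graph `G₀` on a vertex subset: edges when closed neighborhoods intersect. -/
def overlapGraph {Y : Type*} (G : SimpleGraph Y) (Y0 : Set Y) : SimpleGraph Y0 where
  Adj a b := a ≠ b ∧ (nbd G a.1 ∩ nbd G b.1).Nonempty
  symm := by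
    constructor
    intro a b h
    exact ⟨h.1.symm, by rw [Set.inter_comm]; exact h.2⟩
  loopless := ⟨fun a h => h.1 rfl⟩

/-- Graph `G₀'` on a vertex subset: edges when open neighborhoods intersect. -/
def bOverlapGraph {Y : Type*} (G : SimpleGraph Y) (Y0 : Set Y) : SimpleGraph Y0 where
  Adj a b := a ≠ b ∧ (G.neighborSet a.1 ∩ G.neighborSet b.1).Nonempty
  symm := by
    constructor
    intro a b h
    exact ⟨h.1.symm, by rw [Set.inter_comm]; exact h.2⟩
  loopless := ⟨fun a h => h.1 rfl⟩

lemma posOrth_isOpen (A : Type*) [Fintype A] : IsOpen (posOrth A) := by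
  have h : posOrth A = ⋂ a, (fun g : A → ℝ => g a) ⁻¹' Set.Ioi 0 := by
    ext g; simp [posOrth, Set.mem_iInter]
  rw [h]
  exact isOpen_iInter_of_finite fun a => isOpen_Ioi.preimage (continuous_apply a)

lemma clm_apply_sum {A : Type*} [Fintype A] [DecidableEq A]
    (L : (A → ℝ) →L[ℝ] ℝ) (v : A → ℝ) :
    ∑ a, L (Pi.single a 1) * v a = L v := by
  have hv : v = ∑ a, v a • (Pi.single a (1:ℝ) : A → ℝ) := by
    funext j
    simp [Pi.single_apply, Finset.sum_apply]
  conv_rhs => rw [hv]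
  rw [map_sum]
  refine Finset.sum_congr rfl fun a _ => ?_
  rw [map_smul, smul_eq_mul, mul_comm]

lemma grad_le {A : Type*} [Fintype A] {s : Set (A → ℝ)}
    {φ : (A → ℝ) → ℝ} (hc : ConvexOn ℝ s φ) {x y : A → ℝ}
    (hx : x ∈ s) (hy : y ∈ s) (hd : DifferentiableAt ℝ φ x) :
    φ x + fderiv ℝ φ x (y - x) ≤ φ y := by
  set L := AffineMap.lineMap (k := ℝ) x y with hL
  have hconvg : ConvexOn ℝ (L ⁻¹' s) (φ ∘ L) := hc.comp_affineMap L
  have hder : HasDerivAt (φ ∘ L) (fderiv ℝ φ x (y - x)) 0 := by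
    have hcd : HasDerivAt (fun t : ℝ => L t) (y - x) 0 := by
      have : HasDerivAt (fun t : ℝ => t • (y - x) + x) ((1:ℝ) • (y - x)) 0 :=
        ((hasDerivAt_id 0).smul_const (y - x)).add_const x
      simpa [hL, AffineMap.lineMap_apply, one_smul] using this
    have hf : HasFDerivAt φ (fderiv ℝ φ x) (L 0) := by
      simpa [hL] using hd.hasFDerivAt
    exact hf.comp_hasDerivAt 0 hcd
  have h0 : (0:ℝ) ∈ L ⁻¹' s := by simpa [hL] using hx
  have h1 : (1:ℝ) ∈ L ⁻¹' s := by simpa [hL] using hy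
  have := hconvg.le_slope_of_hasDerivAt h0 h1 zero_lt_one hder
  rw [slope_def_field] at this
  simp only [Function.comp, hL, AffineMap.lineMap_apply_one, AffineMap.lineMap_apply_zero] at this
  linarith

lemma bregman_eq {A : Type*} [Fintype A] [DecidableEq A]
    (φ : (A → ℝ) → ℝ) (f g : A → ℝ) :
    bregman φ f g = φ f - φ g - fderiv ℝ φ g (f - g) := by
  unfold bregman
  rw [← clm_apply_sum (fderiv ℝ φ g) (f - g)]
  simp [Pi.sub_apply]

lemma bregman_nonneg {A : Type*} [Fintype A] [DecidableEq A]
    {φ : (A → ℝ) → ℝ} (hd : DifferentiableOn ℝ φ (posOrth A))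
    (hc : ConvexOn ℝ (posOrth A) φ) {f g : A → ℝ}
    (hf : f ∈ posOrth A) (hg : g ∈ posOrth A) :
    0 ≤ bregman φ f g := by
  have hda : DifferentiableAt ℝ φ g :=
    hd.differentiableAt ((posOrth_isOpen A).mem_nhds hg)
  have := grad_le hc hg hf hda
  rw [bregman_eq]
  linarith

lemma bregman_eq_zero {A : Type*} [Fintype A] [DecidableEq A]
    {φ : (A → ℝ) → ℝ} (hd : DifferentiableOn ℝ φ (posOrth A))
    (hc : StrictConvexOn ℝ (posOrth A) φ) {f g : A → ℝ}
    (hf : f ∈ posOrth A) (hg : g ∈ posOrth A)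
    (h : bregman φ f g = 0) : f = g := by
  by_contra hne
  have hda : DifferentiableAt ℝ φ g :=
    hd.differentiableAt ((posOrth_isOpen A).mem_nhds hg)
  rw [bregman_eq] at h
  set m : A → ℝ := (1/2 : ℝ) • f + (1/2 : ℝ) • g with hm
  have hmmem : m ∈ posOrth A :=
    hc.1 hf hg (by norm_num) (by norm_num) (by norm_num)
  have hstrict : φ m < (1/2 : ℝ) * φ f + (1/2 : ℝ) * φ g :=
    hc.2 hf hg hne (by norm_num) (by norm_num) (by norm_num)
  have hgrad := grad_le hc.convexOn hg hmmem hda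
  have hmg : m - g = (1/2 : ℝ) • (f - g) := by
    funext a; simp [hm]; ring
  rw [hmg, map_smul, smul_eq_mul] at hgrad
  have hfg : fderiv ℝ φ g (f - g) = φ f - φ g := by linarith
  rw [hfg] at hgrad
  linarith

noncomputable def psPot (γ : ℝ) {A : Type*} [Fintype A] (f : A → ℝ) : ℝ :=
  (∑ a, f a ^ (1 + γ)) ^ (1 / (1 + γ))

/-- If the neighborhoods `n(y), y ∈ 𝒴₀` cover `𝒴`, the overlap graph `G₀`
is connected, and all local potentials are (differentiable and) strictly convex on the
positive orthant, then the composite local Bregman divergence satisfies the coincidence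
axiom on the probability simplex. -/
theorem stmt0 {Y : Type*} [Fintype Y] [DecidableEq Y]
    (G : SimpleGraph Y) [DecidableRel G.Adj] (Y0 : Finset Y)
    (φ : ∀ y : Y, (↥(G.neighborSet y) → ℝ) → ℝ)
    (hdiff : ∀ y ∈ Y0, DifferentiableOn ℝ (φ y) (posOrth ↥(G.neighborSet y)))
    (hconv : ∀ y ∈ Y0, StrictConvexOn ℝ (posOrth ↥(G.neighborSet y)) (φ y))
    (hcover : (⋃ y ∈ Y0, nbd G y) = Set.univ)
    (hconn : (overlapGraph G (Y0 : Set Y)).Connected)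
    (p q : Y → ℝ) (hp : p ∈ probSet Y) (hq : q ∈ probSet Y)
    (h : DPhi G Y0 φ p q = 0) : p = q := by
  obtain ⟨hppos, hpsum⟩ := hp
  obtain ⟨hqpos, hqsum⟩ := hq
  -- each term is nonneg
  have hterm : ∀ y ∈ Y0, 0 ≤ p y * bregman (φ y)
      (fun z => p z.1 / p y) (fun z => q z.1 / q y) := by
    intro y hy
    refine mul_nonneg (hppos y).le (bregman_nonneg (hdiff y hy) (hconv y hy).convexOn ?_ ?_)
    · exact fun z => div_pos (hppos z.1) (hppos y)
    · exact fun z => div_pos (hqpos z.1) (hqpos y)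
  have hzero : ∀ y ∈ Y0,
      p y * bregman (φ y) (fun z => p z.1 / p y) (fun z => q z.1 / q y) = 0 :=
    (Finset.sum_eq_zero_iff_of_nonneg hterm).mp h
  -- coincidence for each local divergence
  have heq : ∀ y ∈ Y0,
      (fun z : ↥(G.neighborSet y) => p z.1 / p y) = fun z => q z.1 / q y := by
    intro y hy
    have hb : bregman (φ y) (fun z : ↥(G.neighborSet y) => p z.1 / p y)
        (fun z => q z.1 / q y) = 0 := by
      have := hzero y hy
      rcases mul_eq_zero.mp this with h' | h'
      · exact absurd h' (ne_of_gt (hppos y))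
      · exact h'
    exact bregman_eq_zero (hdiff y hy) (hconv y hy)
      (fun z => div_pos (hppos z.1) (hppos y))
      (fun z => div_pos (hqpos z.1) (hqpos y)) hb
  -- ratio r w = p w / q w is constant on each closed neighborhood
  have hnbd : ∀ y ∈ Y0, ∀ w ∈ nbd G y, p w / q w = p y / q y := by
    intro y hy w hw
    rcases hw with rfl | hw
    · rfl
    · have hz : G.Adj y w := hw
      have := congrFun (heq y hy) ⟨w, hw⟩
      simp only at this
      rw [div_eq_div_iff (ne_of_gt (hppos y)) (ne_of_gt (hqpos y))] at this
      rw [div_eq_div_iff (ne_of_gt (hqpos w)) (ne_of_gt (hqpos y))]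
      linarith [this]
  -- constant along the overlap graph
  have hreach : ∀ a b : ↥(Y0 : Set Y),
      (overlapGraph G (Y0 : Set Y)).Reachable a b → p a.1 / q a.1 = p b.1 / q b.1 := by
    intro a b hr
    obtain ⟨w⟩ := hr
    induction w with
    | nil => rfl
    | cons hadj w ih =>
      rename_i u v t
      obtain ⟨-, x, hxu, hxv⟩ := hadj
      have hu : x ∈ nbd G u.1 := hxu
      have hv : x ∈ nbd G v.1 := hxv
      have h1 := hnbd u.1 (by exact_mod_cast u.2) x hu
      have h2 := hnbd v.1 (by exact_mod_cast v.2) x hv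
      calc p u.1 / q u.1 = p x / q x := h1.symm
        _ = p v.1 / q v.1 := h2
        _ = p t.1 / q t.1 := ih
  obtain ⟨y0⟩ := hconn.nonempty
  set c : ℝ := p y0.1 / q y0.1 with hc
  have hconst : ∀ w : Y, p w / q w = c := by
    intro w
    have hwu : w ∈ ⋃ y ∈ Y0, nbd G y := by rw [hcover]; trivial
    simp only [Set.mem_iUnion] at hwu
    obtain ⟨y, hy, hwy⟩ := hwu
    have h1 := hnbd y hy w hwy
    have h2 := hreach ⟨y, by exact_mod_cast hy⟩ y0 (hconn.preconnected _ _)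
    rw [h1]
    exact h2
  have hpc : ∀ w, p w = c * q w := fun w =>
    (div_eq_iff (ne_of_gt (hqpos w))).mp (hconst w)
  have hc1 : c = 1 := by
    have : ∑ w, p w = c * ∑ w, q w := by
      rw [Finset.mul_sum]
      exact Finset.sum_congr rfl fun w _ => hpc w
    rw [hpsum, hqsum, mul_one] at this
    exact this.symm
  funext w
  rw [hpc w, hc1, one_mul]
end

section
/- Fix γ > 0 and for each y ∈ 𝒴₀ let φ_y be the local pseudo-spherical potential φ_y(f) = (Σ_{z∈b(y)} f_z^{1+γ})^{1/(1+γ)} on ℝ_{>0}^{b(y)}, and let D_Φ be the associated composite local Bregman divergence. Suppose D_Φ(f, g) = 0 for f, g ∈ ℱ. Then for every y ∈ 𝒴₀ there is a constant λ_y > 0 with f_z/g_z = λ_y for all z ∈ b(y); consequently, if b(y) ∩ b(y') ≠ ∅ for some y, y' ∈ 𝒴₀, then all the ratios f_z/g_z are equal for z ∈ b(y) ∪ b(y'). -/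
open scoped BigOperators

lemma young_eq {p q a b : ℝ} (hpq : p.HolderConjugate q) (ha : 0 < a) (hb : 0 < b)
    (h : a * b = a ^ p / p + b ^ q / q) : a ^ p = b ^ q := by
  by_contra hne
  have hstrict := strictConcaveOn_log_Ioi.2 (Set.mem_Ioi.2 (Real.rpow_pos_of_pos ha p))
    (Set.mem_Ioi.2 (Real.rpow_pos_of_pos hb q)) hne
    (inv_pos.2 hpq.pos) (inv_pos.2 hpq.symm.pos) hpq.inv_add_inv_eq_one
  rw [smul_eq_mul, smul_eq_mul, smul_eq_mul, smul_eq_mul, Real.log_rpow ha, Real.log_rpow hb]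
    at hstrict
  have h1 : p⁻¹ * (p * Real.log a) + q⁻¹ * (q * Real.log b) = Real.log (a * b) := by
    rw [Real.log_mul ha.ne' hb.ne', ← mul_assoc, ← mul_assoc,
      inv_mul_cancel₀ hpq.ne_zero, inv_mul_cancel₀ hpq.symm.ne_zero, one_mul, one_mul]
  have h2 : p⁻¹ * a ^ p + q⁻¹ * b ^ q = a * b := by
    rw [h]; ring
  rw [h1, h2] at hstrict
  exact lt_irrefl _ hstrict

lemma psPot_fderiv {A : Type*} [Fintype A] [DecidableEq A] {γ : ℝ} (hγ : 0 < γ) (g : A → ℝ)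
    (hg : ∀ a, 0 < g a) (a : A) :
    fderiv ℝ (psPot γ) g (Pi.single a 1) =
      g a ^ γ * (∑ b, g b ^ (1 + γ)) ^ (1 / (1 + γ) - 1) := by
  have hp : (0:ℝ) < 1 + γ := by linarith
  have hS : 0 < ∑ b, g b ^ (1 + γ) :=
    Finset.sum_pos (fun b _ => Real.rpow_pos_of_pos (hg b) _) ⟨a, Finset.mem_univ a⟩
  have hSum : HasFDerivAt (fun f : A → ℝ => ∑ b, f b ^ (1 + γ))
      (∑ b, ((1 + γ) * g b ^ ((1 + γ) - 1)) • (ContinuousLinearMap.proj b :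
        (A → ℝ) →L[ℝ] ℝ)) g := by
    apply HasFDerivAt.fun_sum
    intro b _
    exact (Real.hasDerivAt_rpow_const (Or.inl (hg b).ne')).comp_hasFDerivAt g
      (ContinuousLinearMap.proj (R := ℝ) (φ := fun _ : A => ℝ) b).hasFDerivAt
  have hOuter : HasDerivAt (fun x : ℝ => x ^ (1 / (1 + γ)))
      ((1 / (1 + γ)) * (∑ b, g b ^ (1 + γ)) ^ (1 / (1 + γ) - 1)) (∑ b, g b ^ (1 + γ)) :=
    Real.hasDerivAt_rpow_const (Or.inl hS.ne')
  have htot : HasFDerivAt (psPot γ (A := A))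
      (((1 / (1 + γ)) * (∑ b, g b ^ (1 + γ)) ^ (1 / (1 + γ) - 1)) •
        (∑ b, ((1 + γ) * g b ^ ((1 + γ) - 1)) • (ContinuousLinearMap.proj b :
        (A → ℝ) →L[ℝ] ℝ))) g := by
    unfold psPot; exact hOuter.comp_hasFDerivAt g hSum
  rw [htot.fderiv]
  rw [ContinuousLinearMap.smul_apply, ContinuousLinearMap.sum_apply]
  have hval : ∑ b, (((1 + γ) * g b ^ ((1 + γ) - 1)) • (ContinuousLinearMap.proj b :
      (A → ℝ) →L[ℝ] ℝ)) (Pi.single a 1) = (1 + γ) * g a ^ ((1 + γ) - 1) := by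
    rw [Finset.sum_eq_single_of_mem a (Finset.mem_univ a)]
    · simp
    · intro b _ hb
      simp [Pi.single_eq_of_ne hb]
  rw [hval]
  have : (1 + γ) - 1 = γ := by ring
  rw [this, smul_eq_mul]
  field_simp

lemma bregman_formula {A : Type*} [Fintype A] [DecidableEq A] [Nonempty A] {γ : ℝ}
    (hγ : 0 < γ) (f g : A → ℝ) (hg : ∀ a, 0 < g a) :
    bregman (psPot γ) f g = (∑ a, f a ^ (1 + γ)) ^ (1 / (1 + γ)) -
      (∑ a, f a * g a ^ γ) * (∑ a, g a ^ (1 + γ)) ^ (1 / (1 + γ) - 1) := by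
  obtain ⟨a0⟩ := (inferInstance : Nonempty A)
  have hS : 0 < ∑ b, g b ^ (1 + γ) :=
    Finset.sum_pos (fun b _ => Real.rpow_pos_of_pos (hg b) _) ⟨a0, Finset.mem_univ a0⟩
  have h1 : ∀ a : A, fderiv ℝ (psPot γ) g (Pi.single a 1) * (f a - g a)
      = f a * g a ^ γ * (∑ b, g b ^ (1 + γ)) ^ (1 / (1 + γ) - 1) -
        g a ^ (1 + γ) * (∑ b, g b ^ (1 + γ)) ^ (1 / (1 + γ) - 1) := by
    intro a
    rw [psPot_fderiv hγ g hg a]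
    have h2 : g a ^ γ * g a = g a ^ (1 + γ) := by
      nth_rewrite 2 [← Real.rpow_one (g a)]
      rw [← Real.rpow_add (hg a)]
      norm_num [add_comm]
    have h3 : g a ^ γ * (∑ b, g b ^ (1 + γ)) ^ (1 / (1 + γ) - 1) * (f a - g a)
        = f a * g a ^ γ * (∑ b, g b ^ (1 + γ)) ^ (1 / (1 + γ) - 1) -
          (g a ^ γ * g a) * (∑ b, g b ^ (1 + γ)) ^ (1 / (1 + γ) - 1) := by ring
    rw [h3, h2]
  have h4 : (∑ b, g b ^ (1 + γ)) * (∑ b, g b ^ (1 + γ)) ^ (1 / (1 + γ) - 1)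
      = (∑ b, g b ^ (1 + γ)) ^ (1 / (1 + γ)) := by
    nth_rewrite 1 [← Real.rpow_one (∑ b, g b ^ (1 + γ))]
    rw [← Real.rpow_add hS]
    congr 1; ring
  simp only [bregman, psPot]
  rw [Finset.sum_congr rfl (fun a _ => h1 a), Finset.sum_sub_distrib,
    ← Finset.sum_mul, ← Finset.sum_mul, h4]
  ring

lemma bregman_key {A : Type*} [Fintype A] [DecidableEq A] [Nonempty A] {γ : ℝ}
    (hγ : 0 < γ) (f g : A → ℝ) (hf : ∀ a, 0 < f a) (hg : ∀ a, 0 < g a) :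
    0 ≤ bregman (psPot γ) f g ∧
      (bregman (psPot γ) f g = 0 → ∃ lam : ℝ, 0 < lam ∧ ∀ a, f a = lam * g a) := by
  obtain ⟨a0⟩ := (inferInstance : Nonempty A)
  set p : ℝ := 1 + γ with hpdef
  set q : ℝ := (1 + γ) / γ with hqdef
  have hp0 : (0:ℝ) < p := by rw [hpdef]; linarith
  have hq0 : (0:ℝ) < q := by rw [hqdef]; positivity
  have hpq : p.HolderConjugate q := by
    refine ⟨?_, hp0, hq0⟩
    rw [hpdef, hqdef, inv_div, inv_one, inv_eq_one_div, ← add_div]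
    exact div_self (by linarith)
  have hγq : γ * q = p := by rw [hpdef, hqdef]; field_simp
  have hSf : 0 < ∑ b, f b ^ p :=
    Finset.sum_pos (fun b _ => Real.rpow_pos_of_pos (hf b) _) ⟨a0, Finset.mem_univ a0⟩
  have hSg : 0 < ∑ b, g b ^ p :=
    Finset.sum_pos (fun b _ => Real.rpow_pos_of_pos (hg b) _) ⟨a0, Finset.mem_univ a0⟩
  set F : ℝ := (∑ b, f b ^ p) ^ (1 / p) with hFdef
  set Gq : ℝ := (∑ b, g b ^ p) ^ (1 / q) with hGdef
  have hF : 0 < F := Real.rpow_pos_of_pos hSf _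
  have hGq : 0 < Gq := Real.rpow_pos_of_pos hSg _
  have hFp : F ^ p = ∑ b, f b ^ p := by
    rw [hFdef, one_div, Real.rpow_inv_rpow hSf.le hp0.ne']
  have hGqq : Gq ^ q = ∑ b, g b ^ p := by
    rw [hGdef, one_div, Real.rpow_inv_rpow hSg.le hq0.ne']
  set u : A → ℝ := fun a => f a / F with hudef
  set v : A → ℝ := fun a => g a ^ γ / Gq with hvdef
  have hu : ∀ a, u a ^ p = f a ^ p / ∑ b, f b ^ p := by
    intro a
    rw [hudef]
    simp only []
    rw [Real.div_rpow (hf a).le hF.le, hFp]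
  have hv : ∀ a, v a ^ q = g a ^ p / ∑ b, g b ^ p := by
    intro a
    rw [hvdef]
    simp only []
    rw [Real.div_rpow (Real.rpow_nonneg (hg a).le γ) hGq.le, ← Real.rpow_mul (hg a).le,
      hγq, hGqq]
  have hup1 : ∑ a, u a ^ p = 1 := by
    simp only [hu]
    rw [← Finset.sum_div, div_self hSf.ne']
  have hvq1 : ∑ a, v a ^ q = 1 := by
    simp only [hv]
    rw [← Finset.sum_div, div_self hSg.ne']
  have huv : ∑ a, u a * v a = (∑ a, f a * g a ^ γ) / (F * Gq) := by
    rw [Finset.sum_div]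
    refine Finset.sum_congr rfl fun a _ => ?_
    rw [hudef, hvdef]
    simp only []
    rw [div_mul_div_comm]
  have hupos : ∀ a, 0 < u a := fun a => div_pos (hf a) hF
  have hvpos : ∀ a, 0 < v a := fun a => div_pos (Real.rpow_pos_of_pos (hg a) γ) hGq
  have hyoung : ∀ a : A, u a * v a ≤ u a ^ p / p + v a ^ q / q := fun a =>
    Real.young_inequality_of_nonneg (hupos a).le (hvpos a).le hpq
  have hle1 : ∑ a, u a * v a ≤ 1 := by
    calc ∑ a, u a * v a ≤ ∑ a, (u a ^ p / p + v a ^ q / q) :=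
          Finset.sum_le_sum fun a _ => hyoung a
      _ = (∑ a, u a ^ p) / p + (∑ a, v a ^ q) / q := by
          rw [Finset.sum_add_distrib, Finset.sum_div, Finset.sum_div]
      _ = 1 := by
          rw [hup1, hvq1, one_div, one_div, hpq.inv_add_inv_eq_one]
  have hexp : (∑ b, g b ^ p) ^ (1 / p - 1) = Gq⁻¹ := by
    have h5 : 1 / p - 1 = -(1 / q) := by
      rw [one_div, one_div]
      have := hpq.inv_add_inv_eq_one
      linarith
    rw [h5, Real.rpow_neg hSg.le, hGdef]
  have hbf : bregman (psPot γ) f g = F - (∑ a, f a * g a ^ γ) * Gq⁻¹ := by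
    rw [bregman_formula hγ f g hg, ← hpdef, ← hFdef, hexp]
  constructor
  · rw [hbf, sub_nonneg, ← div_eq_mul_inv, div_le_iff₀ hGq]
    have := (div_le_one (by positivity : (0:ℝ) < F * Gq)).1 (huv ▸ hle1)
    linarith [this]
  · intro hb0
    rw [hbf] at hb0
    have hsum_eq : (∑ a, f a * g a ^ γ) = F * Gq := by
      have h6 : (∑ a, f a * g a ^ γ) * Gq⁻¹ = F := by linarith
      rw [← div_eq_mul_inv, div_eq_iff hGq.ne'] at h6
      rw [h6]
    have huv1 : ∑ a, u a * v a = 1 := by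
      rw [huv, hsum_eq, div_self (by positivity)]
    have hgap : ∑ a, (u a ^ p / p + v a ^ q / q - u a * v a) = 0 := by
      rw [Finset.sum_sub_distrib, Finset.sum_add_distrib, ← Finset.sum_div, ← Finset.sum_div,
        hup1, hvq1, huv1, one_div, one_div, hpq.inv_add_inv_eq_one, sub_self]
    have hzero : ∀ a ∈ Finset.univ, u a ^ p / p + v a ^ q / q - u a * v a = 0 :=
      (Finset.sum_eq_zero_iff_of_nonneg fun a _ => sub_nonneg.2 (hyoung a)).1 hgap
    refine ⟨((∑ b, f b ^ p) / ∑ b, g b ^ p) ^ (1 / p), Real.rpow_pos_of_pos (by positivity) _,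
      fun a => ?_⟩
    have h7 : u a ^ p = v a ^ q := by
      refine young_eq hpq (hupos a) (hvpos a) ?_
      have := hzero a (Finset.mem_univ a)
      linarith
    rw [hu, hv] at h7
    have h8 : f a ^ p = (∑ b, f b ^ p) / (∑ b, g b ^ p) * g a ^ p := by
      rw [div_eq_div_iff hSf.ne' hSg.ne'] at h7
      field_simp
      linarith [h7]
    have h9 : f a = (f a ^ p) ^ (1 / p) := by
      rw [one_div, Real.rpow_rpow_inv (hf a).le hp0.ne']
    rw [h9, h8, Real.mul_rpow (by positivity) (Real.rpow_nonneg (hg a).le p),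
      one_div, Real.rpow_rpow_inv (hg a).le hp0.ne', ← one_div]

lemma bregman_psPot_empty {A : Type*} [Fintype A] [DecidableEq A] [IsEmpty A] {γ : ℝ}
    (hγ : 0 < γ) (f g : A → ℝ) : bregman (psPot γ) f g = 0 := by
  have h1 : (1:ℝ) / (1 + γ) ≠ 0 := by positivity
  simp [bregman, psPot, Real.zero_rpow h1]


/-- If the composite local Bregman divergence built from the local
pseudo-spherical potentials vanishes at `(f, g)`, then on each neighborhood `b(y)`, `y ∈ 𝒴₀`,
the ratios `f z / g z` are constant; consequently if `b(y) ∩ b(y') ≠ ∅` for `y, y' ∈ 𝒴₀`,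
all the ratios `f z / g z` for `z ∈ b(y) ∪ b(y')` coincide. -/
theorem stmt2 {Y : Type*} [Fintype Y] [DecidableEq Y]
    (G : SimpleGraph Y) [DecidableRel G.Adj] (Y0 : Finset Y)
    (γ : ℝ) (hγ : 0 < γ)
    (f g : Y → ℝ) (hf : f ∈ posOrth Y) (hg : g ∈ posOrth Y)
    (h : DPhi G Y0 (fun y => psPot γ (A := ↥(G.neighborSet y))) f g = 0) :
    (∀ y ∈ Y0, ∃ lam : ℝ, 0 < lam ∧ ∀ z ∈ G.neighborSet y, f z / g z = lam) ∧
    (∀ y ∈ Y0, ∀ y' ∈ Y0, (G.neighborSet y ∩ G.neighborSet y').Nonempty →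
      ∀ z ∈ G.neighborSet y ∪ G.neighborSet y',
        ∀ z' ∈ G.neighborSet y ∪ G.neighborSet y', f z / g z = f z' / g z') := by
  have hterm : ∀ y : Y, 0 ≤ bregman (psPot γ (A := ↥(G.neighborSet y)))
      (fun z => f z.1 / f y) (fun z => g z.1 / g y) := by
    intro y
    rcases isEmpty_or_nonempty ↥(G.neighborSet y) with hA | hA
    · exact le_of_eq (bregman_psPot_empty hγ _ _).symm
    · exact (bregman_key hγ (fun z : ↥(G.neighborSet y) => f z.1 / f y)
        (fun z : ↥(G.neighborSet y) => g z.1 / g y) (fun a => div_pos (hf a.1) (hf y))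
        (fun a => div_pos (hg a.1) (hg y))).1
  have hzero : ∀ y ∈ Y0, bregman (psPot γ (A := ↥(G.neighborSet y)))
      (fun z => f z.1 / f y) (fun z => g z.1 / g y) = 0 := by
    intro y hy
    simp only [DPhi] at h
    have h2 := (Finset.sum_eq_zero_iff_of_nonneg
      (fun y _ => mul_nonneg (hf y).le (hterm y))).1 h y hy
    exact (mul_eq_zero.1 h2).resolve_left (hf y).ne'
  have main : ∀ y ∈ Y0, ∃ lam : ℝ, 0 < lam ∧ ∀ z ∈ G.neighborSet y, f z / g z = lam := by
    intro y hy
    rcases isEmpty_or_nonempty ↥(G.neighborSet y) with hA | hA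
    · exact ⟨1, one_pos, fun z hz => (hA.false ⟨z, hz⟩).elim⟩
    · obtain ⟨lam', hlam', hprop⟩ := (bregman_key hγ (fun z : ↥(G.neighborSet y) => f z.1 / f y)
        (fun z : ↥(G.neighborSet y) => g z.1 / g y) (fun a => div_pos (hf a.1) (hf y))
        (fun a => div_pos (hg a.1) (hg y))).2 (hzero y hy)
      refine ⟨lam' * (f y / g y), mul_pos hlam' (div_pos (hf y) (hg y)), fun z hz => ?_⟩
      have h3 := hprop ⟨z, hz⟩
      simp only at h3
      have hfy := (hf y).ne'
      have hgy := (hg y).ne'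
      have hgz := (hg z).ne'
      field_simp at h3 ⊢
      linear_combination h3
  refine ⟨main, fun y hy y' hy' ⟨z0, hz0, hz0'⟩ z hz z' hz' => ?_⟩
  obtain ⟨lam, hlam, hl⟩ := main y hy
  obtain ⟨lam2, hlam2, hl2⟩ := main y' hy'
  have heq : lam = lam2 := by rw [← hl z0 hz0, hl2 z0 hz0']
  have hall : ∀ w ∈ G.neighborSet y ∪ G.neighborSet y', f w / g w = lam := by
    intro w hw
    rcases hw with hw | hw
    · exact hl w hw
    · rw [hl2 w hw, heq]
  rw [hall z hz, hall z' hz']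
end

section
/- Let 𝒴 = {±1}^D, let A₁, …, A_m be subsets of {1, …, D}, and define the undirected graph G = (𝒴, E) by (y, z) ∈ E if and only if y ≠ z and there exists ℓ ∈ {1,…,m} such that y_{A_ℓᶜ} = z_{A_ℓᶜ}. With 𝒴₀ = 𝒴, define G₀ = (𝒴₀, E₀) by (y, y') ∈ E₀ iff y ≠ y' and n(y) ∩ n(y') ≠ ∅, where n(y) = b(y) ∪ {y}. Then G₀ is connected if and only if ⋃_{ℓ=1}^m A_ℓ = {1, …, D}. -/
open scoped BigOperators

/-- The overlap graph `G₀` in the case `𝒴₀ = 𝒴`, defined directly on `𝒴`. -/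
def overlapGraphFull {Y : Type*} (G : SimpleGraph Y) : SimpleGraph Y where
  Adj a b := a ≠ b ∧ (nbd G a ∩ nbd G b).Nonempty
  symm := by
    constructor
    intro a b h
    exact ⟨h.1.symm, by rw [Set.inter_comm]; exact h.2⟩
  loopless := ⟨fun a h => h.1 rfl⟩

/-- The neighborhood graph of the composite likelihood on `{±1}^D` (here `Fin D → Bool`):
`y` and `z` are adjacent iff `y ≠ z` and they agree outside some `A ℓ`. -/
def clGraph (D m : ℕ) (A : Fin m → Finset (Fin D)) : SimpleGraph (Fin D → Bool) where
  Adj y z := y ≠ z ∧ ∃ ℓ : Fin m, ∀ i : Fin D, i ∉ A ℓ → y i = z i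
  symm := by
    constructor
    rintro y z ⟨h1, ℓ, h2⟩
    exact ⟨h1.symm, ℓ, fun i hi => (h2 i hi).symm⟩
  loopless := ⟨fun y h => h.1 rfl⟩

/-- With `𝒴₀ = 𝒴`, the overlap graph `G₀` of the composite-likelihood
neighborhood system is connected iff `⋃ ℓ A_ℓ = {1, …, D}`. -/
theorem stmt4 (D m : ℕ) (A : Fin m → Finset (Fin D)) :
    (overlapGraphFull (clGraph D m A)).Connected ↔
      (⋃ ℓ : Fin m, (A ℓ : Set (Fin D))) = Set.univ := by
  constructor
  · intro hconn
    by_contra h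
    obtain ⟨i, hi⟩ : ∃ i : Fin D, ∀ ℓ, i ∉ A ℓ := by
      rw [Set.eq_univ_iff_forall] at h
      push_neg at h
      obtain ⟨i, hi⟩ := h
      exact ⟨i, fun ℓ hℓ => hi (Set.mem_iUnion.mpr ⟨ℓ, hℓ⟩)⟩
    have hcl : ∀ a b : Fin D → Bool, (clGraph D m A).Adj a b → a i = b i := by
      rintro a b ⟨-, ℓ, h2⟩
      exact h2 i (hi ℓ)
    have hadj : ∀ a b : Fin D → Bool,
        (overlapGraphFull (clGraph D m A)).Adj a b → a i = b i := by
      rintro a b ⟨-, w, hwa, hwb⟩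
      have h1 : w i = a i := by
        rcases hwa with h | h
        · rw [h]
        · exact (hcl a w h).symm
      have h2 : w i = b i := by
        rcases hwb with h | h
        · rw [h]
        · exact (hcl b w h).symm
      rw [← h1, h2]
    have key : ∀ a b : Fin D → Bool,
        (overlapGraphFull (clGraph D m A)).Reachable a b → a i = b i := by
      intro a b hr
      refine hr.elim fun p => ?_
      induction p with
      | nil => rfl
      | cons h q ih => rw [hadj _ _ h]; exact ih q.reachable
    have := key (fun _ => true) (fun _ => false)
      (hconn.preconnected (fun _ => true) (fun _ => false))
    simp at this
  · intro hcov
    have hcov' : ∀ i : Fin D, ∃ ℓ, i ∈ A ℓ := by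
      intro i
      have : i ∈ ⋃ ℓ : Fin m, (A ℓ : Set (Fin D)) := hcov ▸ Set.mem_univ i
      simpa [Set.mem_iUnion] using this
    have reach : ∀ n (y z : Fin D → Bool),
        (Finset.univ.filter (fun j => y j ≠ z j)).card ≤ n →
        (clGraph D m A).Reachable y z := by
      intro n
      induction n with
      | zero =>
        intro y z h
        have : y = z := by
          funext j
          by_contra hj
          have : j ∈ Finset.univ.filter (fun j => y j ≠ z j) := by
            simp [hj]
          rw [Finset.card_eq_zero.mp (Nat.le_zero.mp h)] at this
          simp at this
        exact this ▸ SimpleGraph.Reachable.refl y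
      | succ n ih =>
        intro y z h
        by_cases hyz : y = z
        · exact hyz ▸ SimpleGraph.Reachable.refl y
        obtain ⟨i, hi⟩ : ∃ i, y i ≠ z i := Function.ne_iff.mp hyz
        set y' := Function.update y i (z i) with hy'
        obtain ⟨ℓ, hℓ⟩ := hcov' i
        have adj : (clGraph D m A).Adj y y' := by
          refine ⟨?_, ℓ, ?_⟩
          · intro he
            apply hi
            have := congrFun he i
            rwa [hy', Function.update_self] at this
          · intro j hj
            have hji : j ≠ i := fun hji => hj (hji ▸ hℓ)
            rw [hy', Function.update_of_ne hji]
        have hcard : (Finset.univ.filter (fun j => y' j ≠ z j)).card ≤ n := by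
          have hsub : Finset.univ.filter (fun j => y' j ≠ z j) ⊆
              (Finset.univ.filter (fun j => y j ≠ z j)).erase i := by
            intro j hj
            simp only [Finset.mem_filter, Finset.mem_univ, true_and] at hj
            have hji : j ≠ i := by
              intro hji
              apply hj
              rw [hji, hy', Function.update_self]
            refine Finset.mem_erase.mpr ⟨hji, ?_⟩
            simp only [Finset.mem_filter, Finset.mem_univ, true_and]
            rwa [hy', Function.update_of_ne hji] at hj
          have hmem : i ∈ Finset.univ.filter (fun j => y j ≠ z j) := by simp [hi]
          calc (Finset.univ.filter (fun j => y' j ≠ z j)).card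
              ≤ ((Finset.univ.filter (fun j => y j ≠ z j)).erase i).card :=
                Finset.card_le_card hsub
            _ = (Finset.univ.filter (fun j => y j ≠ z j)).card - 1 :=
                Finset.card_erase_of_mem hmem
            _ ≤ n := by omega
        exact adj.reachable.trans (ih y' z hcard)
    have hle : clGraph D m A ≤ overlapGraphFull (clGraph D m A) := by
      intro a b hab
      exact ⟨hab.1, ⟨a, Set.mem_insert _ _, Set.mem_insert_of_mem _ hab.symm⟩⟩
    refine ⟨fun y z => (reach _ y z le_rfl).mono hle⟩
end

section
/- Let G = (𝒴, E) be an undirected graph without loops on the finite set 𝒴, let 𝒴₀ = 𝒴, and suppose each local potential is additive: φ_y(f) = Σ_{z∈b(y)} φ_{yz}(f_z), where each φ_{yz} : ℝ_{>0} → ℝ is differentiable and convex. Then the proper homogeneous score obtained as the negative gradient of the G-local potential φ(f) = Σ_{y∈𝒴} f_y φ_y(f_{b(y)}/f_y) equals S(y, f) = −∂_y φ(f) = Σ_{z∈b(y)} { −φ_{yz}(f_z/f_y) + (f_z/f_y) φ'_{yz}(f_z/f_y) − φ'_{zy}(f_y/f_z) }, which depends on f only through (f_z)_{z∈n(y)};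 i.e. the score is G-local. -/
open scoped BigOperators

noncomputable def auxL {Y : Type*} [Fintype Y] [DecidableEq Y]
    (G : SimpleGraph Y) [DecidableRel G.Adj] (φ : Y → Y → ℝ → ℝ) (g : Y → ℝ) :
    (Y → ℝ) →L[ℝ] ℝ :=
  ∑ x : Y,
    (g x • (∑ z ∈ G.neighborFinset x, deriv (φ x z) (g z / g x) •
        (g z • ((-(g x ^ 2)⁻¹) • (ContinuousLinearMap.proj x : (Y → ℝ) →L[ℝ] ℝ))
          + (g x)⁻¹ • (ContinuousLinearMap.proj z : (Y → ℝ) →L[ℝ] ℝ)))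
      + (∑ z ∈ G.neighborFinset x, φ x z (g z / g x)) •
          (ContinuousLinearMap.proj x : (Y → ℝ) →L[ℝ] ℝ))

lemma auxHas {Y : Type*} [Fintype Y] [DecidableEq Y]
    (G : SimpleGraph Y) [DecidableRel G.Adj] (φ : Y → Y → ℝ → ℝ)
    (hdiff : ∀ x z : Y, z ∈ G.neighborSet x → DifferentiableOn ℝ (φ x z) (Set.Ioi 0))
    (g : Y → ℝ) (hg : g ∈ posOrth Y) :
    HasFDerivAt (fun h : Y → ℝ => ∑ x : Y, h x * ∑ z ∈ G.neighborFinset x, φ x z (h z / h x))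
      (auxL G φ g) g := by
  apply HasFDerivAt.fun_sum
  intro x _
  have hx := (ContinuousLinearMap.proj (R := ℝ) (φ := fun _ : Y => ℝ) x).hasFDerivAt (x := g)
  have hS : HasFDerivAt
      (fun h : Y → ℝ => ∑ z ∈ G.neighborFinset x, φ x z (h z / h x))
      (∑ z ∈ G.neighborFinset x, deriv (φ x z) (g z / g x) •
        (g z • ((-(g x ^ 2)⁻¹) • (ContinuousLinearMap.proj x : (Y → ℝ) →L[ℝ] ℝ))
          + (g x)⁻¹ • (ContinuousLinearMap.proj z : (Y → ℝ) →L[ℝ] ℝ))) g := by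
    apply HasFDerivAt.fun_sum
    intro z hz
    have hxne : g x ≠ 0 := ne_of_gt (hg x)
    have hq : HasFDerivAt (fun h : Y → ℝ => h z / h x)
        (g z • ((-(g x ^ 2)⁻¹) • (ContinuousLinearMap.proj x : (Y → ℝ) →L[ℝ] ℝ))
          + (g x)⁻¹ • (ContinuousLinearMap.proj z : (Y → ℝ) →L[ℝ] ℝ)) g := by
      have hinv : HasFDerivAt (fun h : Y → ℝ => (h x)⁻¹)
          ((-(g x ^ 2)⁻¹) • (ContinuousLinearMap.proj x : (Y → ℝ) →L[ℝ] ℝ)) g :=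
        (hasDerivAt_inv hxne).comp_hasFDerivAt g hx
      have hz' := (ContinuousLinearMap.proj (R := ℝ) (φ := fun _ : Y => ℝ) z).hasFDerivAt (x := g)
      have := hz'.fun_mul hinv
      simp only [div_eq_mul_inv]
      simpa only [ContinuousLinearMap.proj_apply] using this
    have hu : (0:ℝ) < g z / g x := div_pos (hg z) (hg x)
    have hφ : HasDerivAt (φ x z) (deriv (φ x z) (g z / g x)) (g z / g x) :=
      ((hdiff x z (by simpa using hz)).differentiableAt
        (Ioi_mem_nhds hu)).hasDerivAt
    exact hφ.comp_hasFDerivAt g hq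
  exact hx.mul hS

lemma auxVal {Y : Type*} [Fintype Y] [DecidableEq Y]
    (G : SimpleGraph Y) [DecidableRel G.Adj] (φ : Y → Y → ℝ → ℝ)
    (g : Y → ℝ) (hg : g ∈ posOrth Y) (y : Y) :
    -(auxL G φ g (Pi.single y 1)) =
      ∑ z ∈ G.neighborFinset y,
        (-(φ y z (g z / g y)) + (g z / g y) * deriv (φ y z) (g z / g y)
          - deriv (φ z y) (g y / g z)) := by
  have hgne : ∀ a, g a ≠ 0 := fun a => ne_of_gt (hg a)
  simp only [auxL, ContinuousLinearMap.coe_sum', Finset.sum_apply,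
    ContinuousLinearMap.add_apply, ContinuousLinearMap.coe_smul',
    Pi.smul_apply, ContinuousLinearMap.proj_apply, smul_eq_mul]
  rw [← Finset.add_sum_erase _ _ (Finset.mem_univ y)]
  have herase : ∀ x ∈ Finset.univ.erase y,
      (g x * (∑ z ∈ G.neighborFinset x, deriv (φ x z) (g z / g x) *
          (g z * (-(g x ^ 2)⁻¹ * Pi.single (M := fun _ : Y => ℝ) y 1 x) + (g x)⁻¹ * Pi.single (M := fun _ : Y => ℝ) y 1 z))
        + (∑ z ∈ G.neighborFinset x, φ x z (g z / g x)) * Pi.single (M := fun _ : Y => ℝ) y 1 x)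
      = if x ∈ G.neighborFinset y then deriv (φ x y) (g y / g x) else 0 := by
    intro x hx
    have hxy : x ≠ y := (Finset.mem_erase.mp hx).1
    rw [Pi.single_eq_of_ne hxy]
    simp only [mul_zero, zero_add, add_zero]
    have : ∀ z, (g x)⁻¹ * Pi.single (M := fun _ : Y => ℝ) y 1 z = if z = y then (g x)⁻¹ else 0 := by
      intro z; rw [Pi.single_apply]; split <;> simp
    simp only [this, mul_ite, mul_zero]
    rw [Finset.sum_ite_eq' (G.neighborFinset x) y
      (fun z => deriv (φ x z) (g z / g x) * (g x)⁻¹)]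
    have hmem : (y ∈ G.neighborFinset x) ↔ (x ∈ G.neighborFinset y) := by
      simp [G.adj_comm]
    rw [mul_ite, mul_zero, if_congr hmem rfl rfl]
    split
    · rw [mul_comm (g x), mul_assoc, inv_mul_cancel₀ (hgne x), mul_one]
    · rfl
  rw [Finset.sum_congr rfl herase]
  rw [Finset.sum_ite_mem]
  have hsub : Finset.univ.erase y ∩ G.neighborFinset y = G.neighborFinset y := by
    apply Finset.inter_eq_right.mpr
    intro x hx
    have hadj : G.Adj y x := (SimpleGraph.mem_neighborFinset _ _ _).mp hx
    exact Finset.mem_erase.mpr ⟨(G.ne_of_adj hadj).symm, Finset.mem_univ x⟩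
  rw [hsub, Pi.single_eq_same]
  simp only [mul_one, Finset.mul_sum]
  rw [← Finset.sum_add_distrib, ← Finset.sum_add_distrib, ← Finset.sum_neg_distrib]
  apply Finset.sum_congr rfl
  intro x hx
  have hxy : x ≠ y := G.ne_of_adj ((SimpleGraph.mem_neighborFinset _ _ _).mp hx).symm
  rw [Pi.single_eq_of_ne hxy]
  have h2 : g x ≠ 0 := hgne x
  have h3 : g y ≠ 0 := hgne y
  field_simp
  ring

/-- For additive local potentials `φ_y(f) = Σ_{z∈b(y)} φ_{yz}(f_z)` with
each `φ_{yz}` differentiable and convex on `ℝ_{>0}`, and `𝒴₀ = 𝒴`, the proper homogeneous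
score `S(y, f) = −∂_y φ(f)` obtained from the `G`-local potential
`φ(f) = Σ_x f_x Σ_{z∈b(x)} φ_{xz}(f_z/f_x)` equals
`Σ_{z∈b(y)} { −φ_{yz}(f_z/f_y) + (f_z/f_y) φ'_{yz}(f_z/f_y) − φ'_{zy}(f_y/f_z) }`;
in particular the score depends on `f` only through the components in `n(y)`,
i.e. it is `G`-local. -/
theorem stmt16 {Y : Type*} [Fintype Y] [DecidableEq Y]
    (G : SimpleGraph Y) [DecidableRel G.Adj]
    (φ : Y → Y → ℝ → ℝ)
    (hconv : ∀ x z : Y, z ∈ G.neighborSet x → ConvexOn ℝ (Set.Ioi 0) (φ x z))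
    (hdiff : ∀ x z : Y, z ∈ G.neighborSet x → DifferentiableOn ℝ (φ x z) (Set.Ioi 0))
    (f : Y → ℝ) (hf : f ∈ posOrth Y) (y : Y) :
    (-(fderiv ℝ
        (fun h : Y → ℝ => ∑ x : Y, h x * ∑ z ∈ G.neighborFinset x, φ x z (h z / h x))
        f (Pi.single y 1))
      = ∑ z ∈ G.neighborFinset y,
          (-(φ y z (f z / f y)) + (f z / f y) * deriv (φ y z) (f z / f y)
            - deriv (φ z y) (f y / f z))) ∧
    (∀ f' ∈ posOrth Y, (∀ w ∈ nbd G y, f w = f' w) →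
      -(fderiv ℝ
          (fun h : Y → ℝ => ∑ x : Y, h x * ∑ z ∈ G.neighborFinset x, φ x z (h z / h x))
          f (Pi.single y 1))
        = -(fderiv ℝ
            (fun h : Y → ℝ => ∑ x : Y, h x * ∑ z ∈ G.neighborFinset x, φ x z (h z / h x))
            f' (Pi.single y 1))) := by
  classical
  have hF := auxHas G φ hdiff f hf
  have hfd : fderiv ℝ
      (fun h : Y → ℝ => ∑ x : Y, h x * ∑ z ∈ G.neighborFinset x, φ x z (h z / h x)) f
      = auxL G φ f := hF.fderiv
  constructor
  · rw [hfd]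
    exact auxVal G φ f hf y
  · intro f' hf' hagree
    have hfd' : fderiv ℝ
        (fun h : Y → ℝ => ∑ x : Y, h x * ∑ z ∈ G.neighborFinset x, φ x z (h z / h x)) f'
        = auxL G φ f' := (auxHas G φ hdiff f' hf').fderiv
    rw [hfd, hfd', auxVal G φ f hf y, auxVal G φ f' hf' y]
    apply Finset.sum_congr rfl
    intro z hz
    have hzy : z ∈ G.neighborSet y := by simpa using hz
    have h1 : f z = f' z := hagree z (Set.mem_insert_of_mem _ hzy)
    have h2 : f y = f' y := hagree y (Set.mem_insert _ _)
    rw [h1, h2]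
end

section
/- Let 𝒴 = {±1}², let G = (𝒴, E) be the graph with (y, y') ∈ E iff d_H(y, y') = 1, with 𝒴₀ = 𝒴, and fix γ > 0. Let Φ consist of the local pseudo-spherical potentials φ_y(f) = (Σ_{z∈b(y)} f_z^{1+γ})^{1/(1+γ)}. Define the probability vectors p and q by p_{(+1,+1)} = p_{(−1,−1)} = 0.1, p_{(−1,+1)} = p_{(+1,−1)} = 0.4 and q_{(+1,+1)} = q_{(−1,−1)} = 0.2, q_{(−1,+1)} = q_{(+1,−1)} = 0.3. Then D_Φ(p, q) = 0 although p ≠ q; hence the composite local Bregman divergence of the local pseudo-spherical potentials with the Hamming-distance-1 neighborhood system does not satisfy the coincidence axiom on 𝒫. -/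
open scoped BigOperators

lemma psPot_hasFDerivAt (γ d : ℝ) (hγ : 0 < γ) (hd : 0 < d)
    {A : Type*} [Fintype A] [Nonempty A] :
    HasFDerivAt (psPot γ (A := A))
      (((1/(1+γ)) * (∑ _a : A, d ^ (1+γ)) ^ (1/(1+γ) - 1)) •
        ∑ a : A, (((1+γ) * d ^ (1+γ-1)) •
          (ContinuousLinearMap.proj a : (A → ℝ) →L[ℝ] ℝ)))
      (fun _ => d) := by
  have hp : (0:ℝ) < 1 + γ := by linarith
  have h1 : HasFDerivAt (fun f : A → ℝ => ∑ a, f a ^ (1+γ))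
      (∑ a : A, (((1+γ) * d ^ (1+γ-1)) •
        (ContinuousLinearMap.proj a : (A → ℝ) →L[ℝ] ℝ))) (fun _ => d) := by
    apply HasFDerivAt.fun_sum
    intro a _
    have hproj : HasFDerivAt (fun f : A → ℝ => f a)
        (ContinuousLinearMap.proj a : (A → ℝ) →L[ℝ] ℝ) (fun _ => d) :=
      (ContinuousLinearMap.proj a : (A → ℝ) →L[ℝ] ℝ).hasFDerivAt
    exact (Real.hasDerivAt_rpow_const (Or.inl hd.ne')).comp_hasFDerivAt _ hproj
  have hS : (0:ℝ) < ∑ _a : A, d ^ (1+γ) := by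
    apply Finset.sum_pos (fun _ _ => Real.rpow_pos_of_pos hd _)
    exact Finset.univ_nonempty
  have h2 : HasDerivAt (fun x : ℝ => x ^ (1/(1+γ)))
      ((1/(1+γ)) * (∑ _a : A, d ^ (1+γ)) ^ (1/(1+γ) - 1)) (∑ _a : A, d ^ (1+γ)) :=
    Real.hasDerivAt_rpow_const (Or.inl hS.ne')
  have H := h2.comp_hasFDerivAt (fun _ : A => d) h1
  exact H

lemma bregman_psPot_const (γ c d : ℝ) (hγ : 0 < γ) (hc : 0 < c) (hd : 0 < d)
    {A : Type*} [Fintype A] [DecidableEq A] [Nonempty A] :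
    bregman (psPot γ) (fun _ : A => c) (fun _ : A => d) = 0 := by
  unfold bregman
  have hp : (0:ℝ) < 1 + γ := by linarith
  have hF := psPot_hasFDerivAt γ d hγ hd (A := A)
  have hfd := hF.fderiv
  rw [hfd]
  have hn : (0:ℝ) < (Fintype.card A : ℝ) := by
    exact_mod_cast Fintype.card_pos
  set n : ℝ := (Fintype.card A : ℝ) with hndef
  have hconst : ∀ x : ℝ, 0 < x → psPot γ (fun _ : A => x) = n ^ (1/(1+γ)) * x := by
    intro x hx
    unfold psPot
    rw [Finset.sum_const, Finset.card_univ, nsmul_eq_mul,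
      Real.mul_rpow hn.le (Real.rpow_nonneg hx.le _),
      ← Real.rpow_mul hx.le, mul_one_div, div_self hp.ne', Real.rpow_one]
  have happ : ∀ a : A,
      (((1/(1+γ)) * (∑ _a : A, d ^ (1+γ)) ^ (1/(1+γ) - 1)) •
        ∑ b : A, (((1+γ) * d ^ (1+γ-1)) •
          (ContinuousLinearMap.proj b : (A → ℝ) →L[ℝ] ℝ))) (Pi.single a 1)
      = (1/(1+γ)) * (∑ _a : A, d ^ (1+γ)) ^ (1/(1+γ) - 1) * ((1+γ) * d ^ (1+γ-1)) := by
    intro a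
    simp [ContinuousLinearMap.sum_apply, Pi.single_apply, mul_ite,
      Finset.sum_ite_eq']
  have hSval : (∑ _a : A, d ^ (1+γ)) = n * d ^ (1+γ) := by
    rw [Finset.sum_const, Finset.card_univ, nsmul_eq_mul]
  have e1 : (n * d ^ (1+γ)) ^ (1/(1+γ)-1) = n ^ (1/(1+γ)-1) * d ^ (-γ) := by
    have hexp : (1+γ)*(1/(1+γ)-1) = -γ := by field_simp; ring
    rw [Real.mul_rpow hn.le (Real.rpow_pos_of_pos hd _).le, ← Real.rpow_mul hd.le,
      hexp]
  have e2 : d ^ (1+γ-1) = d ^ γ := by norm_num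
  have e3 : d ^ (-γ) * d ^ γ = 1 := by
    rw [← Real.rpow_add hd]; norm_num
  have e4 : n * n ^ (1/(1+γ)-1) = n ^ (1/(1+γ)) := by
    nth_rewrite 1 [← Real.rpow_one n]
    rw [← Real.rpow_add hn]; norm_num
  simp only [happ]
  simp only [hSval, e1, e2]
  rw [hconst c hc, hconst d hd, Finset.sum_const, Finset.card_univ, nsmul_eq_mul,
    ← hndef]
  have step : n * ((1/(1+γ)) * (n ^ (1/(1+γ)-1) * d ^ (-γ)) * ((1+γ) * d ^ γ) * (c - d))
      = n ^ (1/(1+γ)) * (c - d) := by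
    rw [show n * ((1/(1+γ)) * (n ^ (1/(1+γ)-1) * d ^ (-γ)) * ((1+γ) * d ^ γ) * (c - d))
        = (n * n ^ (1/(1+γ)-1)) * (d ^ (-γ) * d ^ γ) * ((1/(1+γ)) * (1+γ)) * (c - d)
        from by ring, e3, e4, one_div, inv_mul_cancel₀ hp.ne']
    ring
  rw [show (1/(1+γ)) * (n ^ (1/(1+γ)-1) * d ^ (-γ)) * ((1+γ) * d ^ γ) * (c - d)
      = (1/(1+γ)) * (n ^ (1/(1+γ)-1) * d ^ (-γ)) * ((1+γ) * d ^ γ) * (c - d) from rfl]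
  nlinarith [step]

/-- The Hamming-distance-1 graph on `{±1}²` (here `Bool × Bool`, `true ↔ +1`). -/
def sqGraph : SimpleGraph (Bool × Bool) where
  Adj y z := (y.1 = z.1 ∧ y.2 ≠ z.2) ∨ (y.1 ≠ z.1 ∧ y.2 = z.2)
  symm := by
    constructor
    rintro y z (⟨h1, h2⟩ | ⟨h1, h2⟩)
    · exact Or.inl ⟨h1.symm, fun h => h2 h.symm⟩
    · exact Or.inr ⟨fun h => h1 h.symm, h2.symm⟩
  loopless := by
    constructor
    rintro y (⟨_, h⟩ | ⟨h, _⟩) <;> exact h rfl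

instance : DecidableRel sqGraph.Adj := fun a b =>
  inferInstanceAs (Decidable ((a.1 = b.1 ∧ a.2 ≠ b.2) ∨ (a.1 ≠ b.1 ∧ a.2 = b.2)))

/-- `p_{(+1,+1)} = p_{(−1,−1)} = 0.1`, `p_{(−1,+1)} = p_{(+1,−1)} = 0.4`. -/
noncomputable def pVec : Bool × Bool → ℝ := fun y => if y.1 = y.2 then 0.1 else 0.4

/-- `q_{(+1,+1)} = q_{(−1,−1)} = 0.2`, `q_{(−1,+1)} = q_{(+1,−1)} = 0.3`. -/
noncomputable def qVec : Bool × Bool → ℝ := fun y => if y.1 = y.2 then 0.2 else 0.3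


lemma neighbor_val (r s : ℝ) (y : Bool × Bool) (z : ↥(sqGraph.neighborSet y)) :
    (if z.1.1 = z.1.2 then r else s) = (if y.1 = y.2 then s else r) := by
  obtain ⟨⟨z1, z2⟩, hz⟩ := z
  obtain ⟨y1, y2⟩ := y
  have h : (y1 = z1 ∧ y2 ≠ z2) ∨ (y1 ≠ z1 ∧ y2 = z2) := hz
  revert h
  cases y1 <;> cases y2 <;> cases z1 <;> cases z2 <;> simp

lemma pVec_pos (y : Bool × Bool) : 0 < pVec y := by
  unfold pVec; split <;> norm_num

lemma qVec_pos (y : Bool × Bool) : 0 < qVec y := by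
  unfold qVec; split <;> norm_num

/-- On `𝒴 = {±1}²` with the Hamming-distance-1 neighborhood system and
`𝒴₀ = 𝒴`, the composite local Bregman divergence of the local pseudo-spherical potentials
vanishes at the probability vectors `p ≠ q` above; hence it does not satisfy the
coincidence axiom on `𝒫`. -/
theorem stmt17 (γ : ℝ) (hγ : 0 < γ) :
    pVec ∈ probSet (Bool × Bool) ∧ qVec ∈ probSet (Bool × Bool) ∧
    DPhi sqGraph Finset.univ
      (fun y => psPot γ (A := ↥(sqGraph.neighborSet y))) pVec qVec = 0 ∧
    pVec ≠ qVec ∧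
    ¬ (∀ p ∈ probSet (Bool × Bool), ∀ q ∈ probSet (Bool × Bool),
        DPhi sqGraph Finset.univ
          (fun y => psPot γ (A := ↥(sqGraph.neighborSet y))) p q = 0 → p = q) := by
  have hne : ∀ y : Bool × Bool, Nonempty ↥(sqGraph.neighborSet y) := by
    intro y
    exact ⟨⟨(y.1, !y.2), Or.inl ⟨rfl, by cases y.2 <;> simp⟩⟩⟩
  have hpP : pVec ∈ probSet (Bool × Bool) := by
    refine ⟨pVec_pos, ?_⟩
    simp [Fintype.sum_prod_type, pVec]
    norm_num
  have hqP : qVec ∈ probSet (Bool × Bool) := by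
    refine ⟨qVec_pos, ?_⟩
    simp [Fintype.sum_prod_type, qVec]
    norm_num
  have hD : DPhi sqGraph Finset.univ
      (fun y => psPot γ (A := ↥(sqGraph.neighborSet y))) pVec qVec = 0 := by
    unfold DPhi
    apply Finset.sum_eq_zero
    intro y _
    haveI := hne y
    have hrp : (fun z : ↥(sqGraph.neighborSet y) => pVec z.1 / pVec y)
        = fun _ => (if y.1 = y.2 then (0.4:ℝ) else 0.1) / pVec y :=
      funext fun z => by
        rw [show pVec z.1 = if z.1.1 = z.1.2 then (0.1:ℝ) else 0.4 from rfl,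
          neighbor_val]
    have hrq : (fun z : ↥(sqGraph.neighborSet y) => qVec z.1 / qVec y)
        = fun _ => (if y.1 = y.2 then (0.3:ℝ) else 0.2) / qVec y :=
      funext fun z => by
        rw [show qVec z.1 = if z.1.1 = z.1.2 then (0.2:ℝ) else 0.3 from rfl,
          neighbor_val]
    have h1 : (0:ℝ) < if y.1 = y.2 then (0.4:ℝ) else 0.1 := by split <;> norm_num
    have h2 : (0:ℝ) < if y.1 = y.2 then (0.3:ℝ) else 0.2 := by split <;> norm_num
    rw [hrp, hrq, bregman_psPot_const γ _ _ hγ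
      (div_pos h1 (pVec_pos _)) (div_pos h2 (qVec_pos _)),
      mul_zero]
  have hneq : pVec ≠ qVec := by
    intro h
    have := congrFun h (true, true)
    simp [pVec, qVec] at this
    norm_num at this
  exact ⟨hpP, hqP, hD, hneq, fun h => hneq (h pVec hpP qVec hqP hD)⟩
end

section
/- Let G = (𝒴, E) be a connected undirected graph without loops on the finite set 𝒴 with 𝒴₀ = 𝒴, and for each y ∈ 𝒴 let b₁(y), …, b_m(y) ⊆ b(y) be subsets with ⋃_{ℓ=1}^m b_ℓ(y) = b(y), and let φ_y(g) = −Σ_{ℓ=1}^m log(1 + Σ_{z∈b_ℓ(y)} g_z) be the extended composite likelihood local potential. If for every y ∈ 𝒴 the indicator vectors 𝟏_{b₁(y)}, …, 𝟏_{b_m(y)} span ℝ^{b(y)}, then the composite local Bregman divergence D_Φ satisfies the coincidence axiom on 𝒫: for all p, q ∈ 𝒫, D_Φ(p, q) = 0 implies p = q. -/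
open scoped BigOperators

lemma breg_log {A : Type*} [Fintype A] [DecidableEq A] {m : ℕ}
    (e : Fin m → A → ℝ) (f g : A → ℝ)
    (hf : ∀ ℓ, 0 < 1 + ∑ a, e ℓ a * f a) (hg : ∀ ℓ, 0 < 1 + ∑ a, e ℓ a * g a) :
    bregman (fun v => -∑ ℓ, Real.log (1 + ∑ a, e ℓ a * v a)) f g
      = ∑ ℓ, ((1 + ∑ a, e ℓ a * f a) / (1 + ∑ a, e ℓ a * g a) - 1
          - Real.log ((1 + ∑ a, e ℓ a * f a) / (1 + ∑ a, e ℓ a * g a))) := by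
  classical
  set L : Fin m → (A → ℝ) →L[ℝ] ℝ :=
    fun ℓ => ∑ a, e ℓ a • (ContinuousLinearMap.proj a : (A → ℝ) →L[ℝ] ℝ) with hL
  have hLapp : ∀ ℓ (v : A → ℝ), L ℓ v = ∑ a, e ℓ a * v a := by
    intro ℓ v
    simp [hL, ContinuousLinearMap.sum_apply, smul_eq_mul]
  have hD : HasFDerivAt (fun v : A → ℝ => -∑ ℓ, Real.log (1 + ∑ a, e ℓ a * v a))
      (-∑ ℓ, (1 + ∑ a, e ℓ a * g a)⁻¹ • L ℓ) g := by
    apply HasFDerivAt.neg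
    apply HasFDerivAt.fun_sum
    intro ℓ _
    have h1 : HasFDerivAt (fun v : A → ℝ => 1 + ∑ a, e ℓ a * v a) (L ℓ) g := by
      have := ((L ℓ).hasFDerivAt (x := g)).const_add 1
      simpa [hLapp] using this
    have := h1.log (ne_of_gt (hg ℓ))
    simpa [hLapp] using this
  have hfd := hD.fderiv
  unfold bregman
  rw [hfd]
  have hsingle : ∀ ℓ a, L ℓ (Pi.single a 1) = e ℓ a := by
    intro ℓ a
    rw [hLapp]
    simp [Pi.single_apply, mul_ite]
  have hsum : ∑ a, (-∑ ℓ, (1 + ∑ b, e ℓ b * g b)⁻¹ • L ℓ) (Pi.single a 1) * (f a - g a)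
      = -∑ ℓ, (1 + ∑ b, e ℓ b * g b)⁻¹ * ((∑ a, e ℓ a * f a) - ∑ a, e ℓ a * g a) := by
    simp only [ContinuousLinearMap.neg_apply, ContinuousLinearMap.sum_apply,
      ContinuousLinearMap.smul_apply, hsingle, smul_eq_mul, neg_mul, Finset.sum_neg_distrib]
    rw [neg_inj]
    simp only [Finset.sum_mul]
    rw [Finset.sum_comm]
    refine Finset.sum_congr rfl fun ℓ _ => ?_
    rw [mul_sub, Finset.mul_sum, Finset.mul_sum, ← Finset.sum_sub_distrib]
    refine Finset.sum_congr rfl fun a _ => ?_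
    ring
  rw [hsum]
  have key : ∀ ℓ : Fin m, (1 + ∑ a, e ℓ a * f a) / (1 + ∑ a, e ℓ a * g a) - 1
      - Real.log ((1 + ∑ a, e ℓ a * f a) / (1 + ∑ a, e ℓ a * g a))
      = -Real.log (1 + ∑ a, e ℓ a * f a) + Real.log (1 + ∑ a, e ℓ a * g a)
        + (1 + ∑ a, e ℓ a * g a)⁻¹ * ((∑ a, e ℓ a * f a) - ∑ a, e ℓ a * g a) := by
    intro ℓ
    rw [Real.log_div (ne_of_gt (hf ℓ)) (ne_of_gt (hg ℓ)),
      div_sub_one (ne_of_gt (hg ℓ)), div_eq_inv_mul]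
    ring
  rw [Finset.sum_congr rfl fun ℓ _ => key ℓ]
  simp only [Finset.sum_add_distrib, Finset.sum_neg_distrib]
  ring

/-- Extended composite likelihood: for a connected graph `G`, `𝒴₀ = 𝒴`,
subsets `b₁(y), …, b_m(y) ⊆ b(y)` covering `b(y)`, and local potentials
`φ_y(g) = −Σ_ℓ log(1 + Σ_{z ∈ b_ℓ(y)} g_z)`, if for every `y` the indicator vectors of the
`b_ℓ(y)` span `ℝ^{b(y)}`, then the composite local Bregman divergence satisfies the
coincidence axiom on `𝒫`. -/
theorem stmt18 {Y : Type*} [Fintype Y] [DecidableEq Y]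
    (G : SimpleGraph Y) [DecidableRel G.Adj] (hGconn : G.Connected)
    (m : ℕ) (c : Y → Fin m → Finset Y)
    (hsub : ∀ (y : Y) (ℓ : Fin m), c y ℓ ⊆ G.neighborFinset y)
    (hcover : ∀ y : Y, Finset.univ.biUnion (c y) = G.neighborFinset y)
    (hspan : ∀ y : Y, Submodule.span ℝ
        (Set.range fun ℓ : Fin m =>
          fun z : ↥(G.neighborSet y) => if z.1 ∈ c y ℓ then (1 : ℝ) else 0) = ⊤)
    (p q : Y → ℝ) (hp : p ∈ probSet Y) (hq : q ∈ probSet Y)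
    (h : DPhi G Finset.univ
        (fun y g => -∑ ℓ : Fin m,
          Real.log (1 + ∑ z : ↥(G.neighborSet y), if z.1 ∈ c y ℓ then g z else 0))
        p q = 0) : p = q := by
  classical
  obtain ⟨hp0, hp1⟩ := hp
  obtain ⟨hq0, hq1⟩ := hq
  -- notation
  have hφeq : ∀ y : Y, (fun g : ↥(G.neighborSet y) → ℝ => -∑ ℓ : Fin m,
      Real.log (1 + ∑ z : ↥(G.neighborSet y), if z.1 ∈ c y ℓ then g z else 0))
      = fun v => -∑ ℓ : Fin m, Real.log (1 + ∑ z : ↥(G.neighborSet y),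
          (if z.1 ∈ c y ℓ then (1:ℝ) else 0) * v z) := by
    intro y; funext v
    congr 1
    refine Finset.sum_congr rfl fun ℓ _ => ?_
    congr 1
    refine congrArg _ (Finset.sum_congr rfl fun z _ => ?_)
    by_cases hz : z.1 ∈ c y ℓ <;> simp [hz]
  have hposS : ∀ (y : Y) (v : ↥(G.neighborSet y) → ℝ), (∀ z, 0 < v z) →
      ∀ ℓ : Fin m, 0 < 1 + ∑ z : ↥(G.neighborSet y),
        (if z.1 ∈ c y ℓ then (1:ℝ) else 0) * v z := by
    intro y v hv ℓ
    have h0 : 0 ≤ ∑ z : ↥(G.neighborSet y), (if z.1 ∈ c y ℓ then (1:ℝ) else 0) * v z :=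
      Finset.sum_nonneg fun z _ => by
        by_cases hz : z.1 ∈ c y ℓ <;> simp [hz, le_of_lt (hv z)]
    linarith
  have hfpos : ∀ y : Y, ∀ z : ↥(G.neighborSet y), 0 < p z.1 / p y :=
    fun y z => div_pos (hp0 z.1) (hp0 y)
  have hgpos : ∀ y : Y, ∀ z : ↥(G.neighborSet y), 0 < q z.1 / q y :=
    fun y z => div_pos (hq0 z.1) (hq0 y)
  have hbr : ∀ y : Y, bregman (fun g : ↥(G.neighborSet y) → ℝ => -∑ ℓ : Fin m,
      Real.log (1 + ∑ z : ↥(G.neighborSet y), if z.1 ∈ c y ℓ then g z else 0))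
      (fun z => p z.1 / p y) (fun z => q z.1 / q y)
      = ∑ ℓ : Fin m,
        ((1 + ∑ z : ↥(G.neighborSet y), (if z.1 ∈ c y ℓ then (1:ℝ) else 0) * (p z.1 / p y))
            / (1 + ∑ z : ↥(G.neighborSet y), (if z.1 ∈ c y ℓ then (1:ℝ) else 0) * (q z.1 / q y)) - 1
          - Real.log ((1 + ∑ z : ↥(G.neighborSet y), (if z.1 ∈ c y ℓ then (1:ℝ) else 0) * (p z.1 / p y))
            / (1 + ∑ z : ↥(G.neighborSet y), (if z.1 ∈ c y ℓ then (1:ℝ) else 0) * (q z.1 / q y)))) := by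
    intro y
    rw [hφeq y]
    exact breg_log _ _ _ (hposS y _ (hfpos y)) (hposS y _ (hgpos y))
  -- each term nonneg
  have hterm_nn : ∀ (y : Y) (ℓ : Fin m) (t : ℝ), 0 < t → 0 ≤ t - 1 - Real.log t := by
    intro _ _ t ht
    have := Real.log_le_sub_one_of_pos ht
    linarith
  have hBnn : ∀ y : Y, 0 ≤ bregman (fun g : ↥(G.neighborSet y) → ℝ => -∑ ℓ : Fin m,
      Real.log (1 + ∑ z : ↥(G.neighborSet y), if z.1 ∈ c y ℓ then g z else 0))
      (fun z => p z.1 / p y) (fun z => q z.1 / q y) := by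
    intro y
    rw [hbr y]
    refine Finset.sum_nonneg fun ℓ _ => hterm_nn y ℓ _ ?_
    exact div_pos (hposS y _ (hfpos y) ℓ) (hposS y _ (hgpos y) ℓ)
  -- from h, each bregman is zero
  simp only [DPhi] at h
  have hzero : ∀ y : Y, bregman (fun g : ↥(G.neighborSet y) → ℝ => -∑ ℓ : Fin m,
      Real.log (1 + ∑ z : ↥(G.neighborSet y), if z.1 ∈ c y ℓ then g z else 0))
      (fun z => p z.1 / p y) (fun z => q z.1 / q y) = 0 := by
    intro y
    have hnn : ∀ y' ∈ Finset.univ (α := Y), 0 ≤ p y' * bregman _ _ _ :=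
      fun y' _ => mul_nonneg (le_of_lt (hp0 y')) (hBnn y')
    have := (Finset.sum_eq_zero_iff_of_nonneg hnn).1 h y (Finset.mem_univ y)
    exact (mul_eq_zero.1 this).resolve_left (ne_of_gt (hp0 y))
  -- equality of ratios on neighborhoods
  have hratio : ∀ y : Y, ∀ z : ↥(G.neighborSet y), p z.1 / p y = q z.1 / q y := by
    intro y
    have h0 := hzero y
    rw [hbr y] at h0
    have hTone : ∀ ℓ : Fin m,
        (1 + ∑ z : ↥(G.neighborSet y), (if z.1 ∈ c y ℓ then (1:ℝ) else 0) * (p z.1 / p y))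
        = (1 + ∑ z : ↥(G.neighborSet y), (if z.1 ∈ c y ℓ then (1:ℝ) else 0) * (q z.1 / q y)) := by
      intro ℓ
      have hx := hposS y _ (hfpos y) ℓ
      have hy := hposS y _ (hgpos y) ℓ
      have ht : 0 < (1 + ∑ z : ↥(G.neighborSet y), (if z.1 ∈ c y ℓ then (1:ℝ) else 0) * (p z.1 / p y))
          / (1 + ∑ z : ↥(G.neighborSet y), (if z.1 ∈ c y ℓ then (1:ℝ) else 0) * (q z.1 / q y)) :=
        div_pos hx hy
      have h1 := (Finset.sum_eq_zero_iff_of_nonneg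
        (fun ℓ _ => hterm_nn y ℓ _ (div_pos (hposS y _ (hfpos y) ℓ) (hposS y _ (hgpos y) ℓ)))).1 h0 ℓ
        (Finset.mem_univ ℓ)
      by_contra hne
      have hne' : (1 + ∑ z : ↥(G.neighborSet y), (if z.1 ∈ c y ℓ then (1:ℝ) else 0) * (p z.1 / p y))
          / (1 + ∑ z : ↥(G.neighborSet y), (if z.1 ∈ c y ℓ then (1:ℝ) else 0) * (q z.1 / q y)) ≠ 1 := by
        intro h2
        exact hne ((div_eq_one_iff_eq (ne_of_gt hy)).1 h2)
      have := Real.log_lt_sub_one_of_pos ht hne'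
      linarith
    -- span argument
    set d : ↥(G.neighborSet y) → ℝ := fun z => p z.1 / p y - q z.1 / q y with hd
    have hdℓ : ∀ ℓ : Fin m, ∑ z : ↥(G.neighborSet y),
        (if z.1 ∈ c y ℓ then (1:ℝ) else 0) * d z = 0 := by
      intro ℓ
      have := hTone ℓ
      have h2 : ∑ z : ↥(G.neighborSet y), (if z.1 ∈ c y ℓ then (1:ℝ) else 0) * (p z.1 / p y)
          = ∑ z : ↥(G.neighborSet y), (if z.1 ∈ c y ℓ then (1:ℝ) else 0) * (q z.1 / q y) := by
        linarith
      simp only [hd, mul_sub, Finset.sum_sub_distrib, h2, sub_self]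
    have hall : ∀ w ∈ Submodule.span ℝ (Set.range fun ℓ : Fin m =>
        fun z : ↥(G.neighborSet y) => if z.1 ∈ c y ℓ then (1 : ℝ) else 0),
        ∑ z : ↥(G.neighborSet y), w z * d z = 0 := by
      intro w hw
      induction hw using Submodule.span_induction with
      | mem w hw => obtain ⟨ℓ, rfl⟩ := hw; exact hdℓ ℓ
      | zero => simp
      | add u v _ _ hu hv => simp [Pi.add_apply, add_mul, Finset.sum_add_distrib, hu, hv]
      | smul a u _ hu =>
        simp only [Pi.smul_apply, smul_eq_mul, mul_assoc, ← Finset.mul_sum, hu, mul_zero]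
    have hdd : ∑ z : ↥(G.neighborSet y), d z * d z = 0 :=
      hall d (by rw [hspan y]; trivial)
    have hdz : ∀ z : ↥(G.neighborSet y), d z = 0 := by
      intro z
      have := (Finset.sum_eq_zero_iff_of_nonneg
        (fun z _ => mul_self_nonneg (d z))).1 hdd z (Finset.mem_univ z)
      exact mul_self_eq_zero.1 this
    intro z
    have := hdz z
    simp only [hd] at this
    linarith
  -- r is constant along edges
  have step : ∀ {u v : Y}, G.Adj u v → p u / q u = p v / q v := by
    intro u v huv
    have hz : (⟨v, huv⟩ : ↥(G.neighborSet u)) = ⟨v, huv⟩ := rfl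
    have hr := hratio u ⟨v, huv⟩
    have h1 : p v * q u = q v * p u :=
      (div_eq_div_iff (ne_of_gt (hp0 u)) (ne_of_gt (hq0 u))).1 hr
    rw [div_eq_div_iff (ne_of_gt (hq0 u)) (ne_of_gt (hq0 v))]
    linarith [h1]
  have hconst : ∀ u v : Y, p u / q u = p v / q v := by
    intro u v
    obtain ⟨w⟩ := hGconn.preconnected u v
    induction w with
    | nil => rfl
    | cons hadj w ih => exact (step hadj).trans ih
  obtain ⟨y0⟩ := hGconn.nonempty
  have hr0 : ∀ y : Y, p y = (p y0 / q y0) * q y := by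
    intro y
    have := (hconst y y0).symm
    rw [div_eq_div_iff (ne_of_gt (hq0 y0)) (ne_of_gt (hq0 y))] at this
    rw [div_mul_eq_mul_div, eq_div_iff (ne_of_gt (hq0 y0))]
    linarith
  have hc1 : p y0 / q y0 = 1 := by
    have h2 : ∑ y, p y = ∑ y, (p y0 / q y0) * q y := Finset.sum_congr rfl fun y _ => hr0 y
    rw [hp1, ← Finset.mul_sum, hq1, mul_one] at h2
    exact h2.symm
  funext y
  rw [hr0 y, hc1, one_mul]
end
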